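/- Let G be a bi-directed graph, G^min_< the graph constructed by Algorithm 4.2 (dropping arrowheads at simplicial vertices and orienting bi-directed edges by boundary containment and a compatible total order), and G̅ any maximal ancestral graph that is Markov equivalent to G. Then the number of arrowheads of G̅ is at least that of G^min_<, where the number of arrowheads of an ancestral graph with d directed and b bi-directed edges is d + 2b. -/

import Mathlib

/-- Possible edge types between an ordered pair of distinct vertices of a
simple mixed graph.  `arrowTo` at `(v, w)` means `v → w`, `arrowFrom` means
`v ← w`, `undir` means `v − w` and `bidir` means `v ↔ w`. -/
inductive EType : Type
  | none | undir | arrowTo | arrowFrom | bidir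
deriving DecidableEq

/-- The edge type seen from the reversed ordered pair of vertices. -/
def EType.mirror : EType → EType
  | .none => .none
  | .undir => .undir
  | .arrowTo => .arrowFrom
  | .arrowFrom => .arrowTo
  | .bidir => .bidir

/-- A simple mixed graph: at most one edge (undirected, directed or
bi-directed) between any two distinct vertices, and no self loops. -/
structure MixedGraph (V : Type) where
  E : V → V → EType
  no_loop : ∀ v, E v v = .none
  symm : ∀ v w, E w v = (E v w).mirror

/-- `(a, b, c)` are three consecutive vertices on the path `p`. -/
def ConsecTriple {V : Type} (p : List V) (a b c : V) : Prop :=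
  ∃ l1 l2, p = l1 ++ a :: b :: c :: l2

namespace MixedGraph

variable {V : Type} (G : MixedGraph V)

/-- `v − w` is an edge of `G`. -/
def Undir (v w : V) : Prop := G.E v w = .undir

/-- `v → w` is an edge of `G`. -/
def Dir (v w : V) : Prop := G.E v w = .arrowTo

/-- `v ↔ w` is an edge of `G`. -/
def Bidir (v w : V) : Prop := G.E v w = .bidir

/-- `v` and `w` are adjacent (joined by some edge). -/
def Adj (v w : V) : Prop := G.E v w ≠ .none

/-- The edge between `a` and `b` has an arrowhead at `b`. -/
def HeadAt (a b : V) : Prop := G.E a b = .arrowTo ∨ G.E a b = .bidir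

/-- Closed boundary: `v` together with its adjacent vertices. -/
def Bd (v : V) : Set V := insert v {w | G.Adj v w}

/-- A set of vertices is complete if all of its pairs of distinct
vertices are adjacent. -/
def Complete (S : Set V) : Prop := ∀ v ∈ S, ∀ w ∈ S, v ≠ w → G.Adj v w

/-- A vertex is simplicial if its closed boundary is complete. -/
def Simplicial (v : V) : Prop := G.Complete (G.Bd v)

/-- `v` is an ancestor of `w`: `v = w` or there is a directed path from
`v` to `w`. -/
def Anc (v w : V) : Prop := Relation.ReflTransGen G.Dir v w

/-- The set of ancestors of vertices in `C`. -/
def anSet (C : Set V) : Set V := {v | ∃ c ∈ C, G.Anc v c}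

/-- `G` is an ancestral graph. -/
def Ancestral : Prop :=
  (∀ v w, G.Dir v w → ¬ G.Anc w v) ∧
  (∀ v w, G.Undir v w → ∀ u, ¬ G.HeadAt u v) ∧
  (∀ v w, G.Bidir v w → ¬ G.Anc v w)

/-- The boundary containment property. -/
def BdContain : Prop :=
  (∀ v w, G.Undir v w → G.Bd v = G.Bd w) ∧
  (∀ v w, G.Dir v w → G.Bd v ⊆ G.Bd w)

/-- `b` is a collider between consecutive neighbours `a` and `c`. -/
def Collider (a b c : V) : Prop := G.HeadAt a b ∧ G.HeadAt c b

/-- A path: a list of distinct vertices, consecutive ones adjacent. -/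
def IsPath (p : List V) : Prop := p.Nodup ∧ p.Chain' G.Adj

/-- `p` is an m-connecting path given `C`: every non-collider on it is
outside `C` and every collider on it is an ancestor of `C`. -/
def IsMConnPath (C : Set V) (p : List V) : Prop :=
  G.IsPath p ∧
  ∀ a b c, ConsecTriple p a b c →
    (G.Collider a b c → b ∈ G.anSet C) ∧ (¬ G.Collider a b c → b ∉ C)

/-- `v` and `w` are m-connected given `C`. -/
def MConn (v w : V) (C : Set V) : Prop :=
  ∃ p, G.IsMConnPath C p ∧ p.head? = some v ∧ p.getLast? = some w

/-- `v` and `w` are m-separated given `C`. -/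
def MSep (v w : V) (C : Set V) : Prop := ¬ G.MConn v w C

/-- A maximal (ancestral) graph: every pair of distinct non-adjacent
vertices is m-separated given some set. -/
def Maximal : Prop :=
  ∀ v w, v ≠ w → ¬ G.Adj v w → ∃ C : Set V, v ∉ C ∧ w ∉ C ∧ G.MSep v w C

/-- `G` is a bi-directed graph. -/
def Bidirected : Prop := ∀ v w, G.E v w = .none ∨ G.E v w = .bidir

/-- `G` is an undirected graph. -/
def UndirectedG : Prop := ∀ v w, G.E v w = .none ∨ G.E v w = .undir

/-- `G` is a directed acyclic graph. -/
def IsDAG : Prop :=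
  (∀ v w, G.E v w = .none ∨ G.E v w = .arrowTo ∨ G.E v w = .arrowFrom) ∧
  (∀ v w, G.Dir v w → ¬ G.Anc w v)

/-- `G` and `H` have the same skeleton. -/
def SameSkeleton (H : MixedGraph V) : Prop := ∀ v w, G.Adj v w ↔ H.Adj v w

/-- `G` and `H` are Markov equivalent: their m-separation relations
coincide. -/
def MarkovEquiv (H : MixedGraph V) : Prop :=
  ∀ v w (C : Set V), v ≠ w → v ∉ C → w ∉ C → (G.MSep v w C ↔ H.MSep v w C)

open Classical in
/-- The edge map obtained from `G` by dropping all arrowheads at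
simplicial vertices. -/
noncomputable def dropE (v w : V) : EType :=
  match G.E v w with
  | .none => .none
  | .undir => .undir
  | .arrowTo => if G.Simplicial w then .undir else .arrowTo
  | .arrowFrom => if G.Simplicial v then .undir else .arrowFrom
  | .bidir =>
      if G.Simplicial v then (if G.Simplicial w then .undir else .arrowTo)
      else (if G.Simplicial w then .arrowFrom else .bidir)

/-- The graph obtained from `G` by dropping all arrowheads at simplicial
vertices; for a bi-directed graph `G` this is the simplicial graph `Gˢ`. -/
noncomputable def drop : MixedGraph V where
  E := G.dropE
  no_loop v := by simp [dropE, G.no_loop]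
  symm v w := by
    unfold dropE
    rw [G.symm v w]
    cases h : G.E v w <;>
      simp only [EType.mirror] <;> split_ifs <;> simp_all [EType.mirror]

open Classical in
/-- The edge map of the minimally oriented graph `G^min_<`: starting from
the simplicial graph, each bi-directed edge `v ↔ w` with `Bd v ⊆ Bd w`
and `v < w` is replaced by `v → w`. -/
noncomputable def gminE [LinearOrder V] (v w : V) : EType :=
  match G.dropE v w with
  | .bidir =>
      if G.Bd v ⊆ G.Bd w ∧ v < w then .arrowTo
      else if G.Bd w ⊆ G.Bd v ∧ w < v then .arrowFrom
      else .bidir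
  | e => e

/-- The graph `G^min_<` produced by Algorithm 4.2 from `G` and the total
order on `V`. -/
noncomputable def gmin [LinearOrder V] : MixedGraph V where
  E := G.gminE
  no_loop v := by
    have h := G.drop.no_loop v
    simp only [drop] at h
    simp [gminE, h]
  symm v w := by
    have h := G.drop.symm v w
    simp only [drop] at h
    unfold gminE
    rw [h]
    cases hE : G.dropE v w <;> simp only [EType.mirror]
    case bidir =>
      by_cases c1 : G.Bd v ⊆ G.Bd w ∧ v < w
      · have c2 : ¬ (G.Bd w ⊆ G.Bd v ∧ w < v) := fun h' => lt_asymm c1.2 h'.2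
        simp [c1, c2, EType.mirror]
      · by_cases c2 : G.Bd w ⊆ G.Bd v ∧ w < v
        · simp [c1, c2, EType.mirror]
        · simp [c1, c2, EType.mirror]

/-- Total number of arrowheads of `G`: the number of directed edges plus
twice the number of bi-directed edges. -/
noncomputable def arr : ℕ :=
  {p : V × V | G.Dir p.1 p.2}.ncard + {p : V × V | G.Bidir p.1 p.2}.ncard

end MixedGraph

/-- `Gm` is a minimally oriented graph for `G`. -/
def MinOriented {V : Type} (G Gm : MixedGraph V) : Prop :=
  Gm.Ancestral ∧ Gm.Maximal ∧ G.MarkovEquiv Gm ∧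
  ∀ H : MixedGraph V, H.Ancestral → H.Maximal → G.MarkovEquiv H → Gm.arr ≤ H.arr

namespace MixedGraph

variable {V : Type} {G : MixedGraph V}

lemma adj_ne {v w : V} (h : G.Adj v w) : v ≠ w := by
  rintro rfl; exact h (G.no_loop v)

lemma mirror_ne_none {e : EType} (h : e ≠ .none) : e.mirror ≠ .none := by
  cases e <;> simp_all [EType.mirror]

lemma adj_symm {v w : V} (h : G.Adj v w) : G.Adj w v := by
  unfold Adj at *; rw [G.symm]; exact mirror_ne_none h

lemma mconn_of_adj {v w : V} (h : G.Adj v w) (C : Set V) : G.MConn v w C := by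
  refine ⟨[v, w], ⟨⟨by simp [adj_ne h], by simp [List.Chain', List.isChain_cons_cons, h]⟩, ?_⟩, rfl, rfl⟩
  rintro a b c ⟨l1, l2, hp⟩
  exfalso
  have := congrArg List.length hp
  simp at this
  omega

lemma bidir_sep (hG : G.Bidirected) {v w : V} (hne : v ≠ w) (hna : ¬ G.Adj v w) :
    G.MSep v w ∅ := by
  rintro ⟨p, ⟨⟨hnd, hch⟩, htr⟩, hh, hl⟩
  rcases p with _ | ⟨x, _ | ⟨y, _ | ⟨z, t⟩⟩⟩
  · simp at hh
  · simp at hh hl; exact hne (hh ▸ hl ▸ rfl)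
  · simp at hh hl
    rw [List.Chain', List.isChain_cons_cons] at hch
    subst hh hl
    exact hna hch.1
  · rw [List.Chain', List.isChain_cons_cons] at hch
    have hayz : G.Adj y z := by
      have := hch.2; rw [List.isChain_cons_cons] at this; exact this.1
    have hcol : G.Collider x y z :=
      ⟨Or.inr ((hG x y).resolve_left hch.1), Or.inr ((hG z y).resolve_left (adj_symm hayz))⟩
    obtain ⟨c, hc, -⟩ := (htr x y z ⟨[], t, rfl⟩).1 hcol
    exact hc

lemma mconn_three {v b u : V} (hvb : G.Adj v b) (hbu : G.Adj b u)
    (hvu : v ≠ u) (hnc : ¬ G.Collider v b u) : G.MConn v u ∅ := by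
  refine ⟨[v, b, u], ⟨⟨by simp [adj_ne hvb, adj_ne hbu, hvu],
    by simp [List.Chain', List.isChain_cons_cons, hvb, hbu]⟩, ?_⟩, rfl, by simp⟩
  rintro a b' c ⟨l1, l2, hp⟩
  have hl1 : l1 = [] := by
    have := congrArg List.length hp
    simp at this
    exact List.eq_nil_of_length_eq_zero (by omega)
  subst hl1
  simp at hp
  obtain ⟨rfl, rfl, rfl, rfl⟩ := hp
  exact ⟨fun hc => absurd hc hnc, fun _ => by simp⟩

lemma mem_bd {v w : V} : w ∈ G.Bd v ↔ w = v ∨ G.Adj v w := by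
  simp [Bd]

lemma simplicial_of_bd_subset {v w : V} (hs : G.Simplicial v) (h : G.Bd w ⊆ G.Bd v) :
    G.Simplicial w := fun a ha b hb hab => hs a (h ha) b (h hb) hab

lemma simplicial_of_noheads (hG : G.Bidirected) {Gb : MixedGraph V}
    (hsk : ∀ v w, G.Adj v w ↔ Gb.Adj v w)
    (h3 : G.MarkovEquiv Gb) {w : V} (hnh : ∀ u, ¬ Gb.HeadAt u w) :
    G.Simplicial w := by
  intro a ha b hb hab
  rw [mem_bd] at ha hb
  rcases ha with rfl | ha
  · rcases hb with rfl | hb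
    · exact absurd rfl hab
    · exact hb
  · rcases hb with rfl | hb
    · exact adj_symm ha
    · by_contra hnab
      have hsep : G.MSep a b ∅ := bidir_sep hG hab hnab
      have hsepb : Gb.MSep a b ∅ := (h3 a b ∅ hab (by simp) (by simp)).1 hsep
      refine hsepb (mconn_three (b := w) ?_ ?_ hab ?_)
      · exact (hsk a w).1 (adj_symm ha)
      · exact (hsk w b).1 hb
      · rintro ⟨h1, _⟩; exact hnh a h1

lemma bd_subset_of_tail (hG : G.Bidirected) {Gb : MixedGraph V}
    (hsk : ∀ v w, G.Adj v w ↔ Gb.Adj v w) (h3 : G.MarkovEquiv Gb)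
    {v w : V} (hadj : Gb.Adj v w) (ht : ¬ Gb.HeadAt v w) :
    G.Bd w ⊆ G.Bd v := by
  intro u hu
  rw [mem_bd] at hu
  rw [mem_bd]
  have hGvw : G.Adj v w := (hsk v w).2 hadj
  by_cases huv : u = v
  · exact Or.inl huv
  rcases hu with rfl | hu
  · exact Or.inr hGvw
  · right
    by_contra hnvu
    have hsep : G.MSep u v ∅ := bidir_sep hG huv (fun h => hnvu (adj_symm h))
    have hsepb : Gb.MSep u v ∅ := (h3 u v ∅ huv (by simp) (by simp)).1 hsep
    refine hsepb (mconn_three (b := w) ?_ ?_ huv ?_)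
    · exact (hsk u w).1 (adj_symm hu)
    · exact (hsk w v).1 (adj_symm hGvw)
    · rintro ⟨_, h2⟩; exact ht h2

lemma gmin_adj [LinearOrder V] (v w : V) : (G.gmin).Adj v w ↔ G.Adj v w := by
  show G.gminE v w ≠ .none ↔ G.E v w ≠ .none
  unfold gminE dropE
  cases h : G.E v w <;> simp only [] <;> split_ifs <;> simp

lemma arr_eq_heads [Finite V] (H : MixedGraph V) :
    H.arr = {p : V × V | H.HeadAt p.1 p.2}.ncard := by
  unfold arr
  have hdisj : Disjoint {p : V × V | H.Dir p.1 p.2} {p : V × V | H.Bidir p.1 p.2} := by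
    rw [Set.disjoint_left]
    rintro p h1 h2
    simp only [Set.mem_setOf_eq, Dir, Bidir] at h1 h2
    rw [h1] at h2; cases h2
  rw [← Set.ncard_union_eq hdisj (Set.toFinite _) (Set.toFinite _)]
  congr 1

lemma gmin_key [LinearOrder V] (hG : G.Bidirected)
    (hord : ∀ v w : V, G.Bd v ⊂ G.Bd w → v < w)
    {Gb : MixedGraph V} (h1 : Gb.Ancestral)
    (hsk : ∀ v w, G.Adj v w ↔ Gb.Adj v w) (h3 : G.MarkovEquiv Gb)
    {v w : V} (hh : (G.gmin).HeadAt v w) (hnb : ¬ Gb.HeadAt v w) :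
    (G.gmin).E v w = .arrowTo ∧ Gb.E w v = .arrowTo := by
  classical
  have hadjmin : (G.gmin).Adj v w := by
    intro h0
    rcases hh with h | h <;> rw [h0] at h <;> cases h
  have hadjG : G.Adj v w := (gmin_adj v w).1 hadjmin
  have hne : v ≠ w := adj_ne hadjG
  have hE : G.E v w = .bidir := (hG v w).resolve_left hadjG
  have hadjGb : Gb.Adj v w := (hsk v w).1 hadjG
  have hsub : G.Bd w ⊆ G.Bd v := bd_subset_of_tail hG hsk h3 hadjGb hnb
  have hdrop : G.dropE v w = if G.Simplicial v then (if G.Simplicial w then EType.undir else EType.arrowTo)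
      else (if G.Simplicial w then EType.arrowFrom else EType.bidir) := by
    unfold dropE; rw [hE]
  by_cases sv : G.Simplicial v
  · have sw : G.Simplicial w := simplicial_of_bd_subset sv hsub
    have heq : (G.gmin).E v w = .undir := by
      show G.gminE v w = .undir
      unfold gminE
      rw [hdrop]
      simp [sv, sw]
    unfold HeadAt at hh; rw [heq] at hh; simp at hh
  · by_cases sw : G.Simplicial w
    · have heq : (G.gmin).E v w = .arrowFrom := by
        show G.gminE v w = .arrowFrom
        unfold gminE
        rw [hdrop]
        simp [sv, sw]
      unfold HeadAt at hh; rw [heq] at hh; simp at hh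
    · have hdrop2 : G.dropE v w = .bidir := by rw [hdrop]; simp [sv, sw]
      have hglE : (G.gmin).E v w = if G.Bd v ⊆ G.Bd w ∧ v < w then EType.arrowTo
          else if G.Bd w ⊆ G.Bd v ∧ w < v then EType.arrowFrom else EType.bidir := by
        show G.gminE v w = _
        unfold gminE
        rw [hdrop2]
      by_cases c1 : G.Bd v ⊆ G.Bd w ∧ v < w
      · have hmin : (G.gmin).E v w = .arrowTo := by rw [hglE]; simp [c1]
        refine ⟨hmin, ?_⟩
        cases hGbE : Gb.E v w with
        | none => exact absurd hGbE hadjGb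
        | undir =>
          exfalso
          have hundir : Gb.Undir w v := by
            show Gb.E w v = .undir
            rw [Gb.symm v w, hGbE]
            rfl
          exact sw (simplicial_of_noheads hG hsk h3 (fun u => h1.2.1 w v hundir u))
        | arrowTo => exact absurd (Or.inl hGbE) hnb
        | arrowFrom => rw [Gb.symm v w, hGbE]; rfl
        | bidir => exact absurd (Or.inr hGbE) hnb
      · exfalso
        by_cases heq : G.Bd v ⊆ G.Bd w
        · have h1' : ¬ v < w := fun h => c1 ⟨heq, h⟩
          by_cases hwv : w < v
          · have hek : (G.gmin).E v w = .arrowFrom := by rw [hglE]; simp [c1, hsub, hwv]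
            unfold HeadAt at hh; rw [hek] at hh; simp at hh
          · exact hne (le_antisymm (not_lt.1 hwv) (not_lt.1 h1'))
        · have hss : G.Bd w ⊂ G.Bd v := lt_iff_le_not_ge.2 ⟨hsub, heq⟩
          have hwv := hord w v hss
          have hek : (G.gmin).E v w = .arrowFrom := by rw [hglE]; simp [c1, hsub, hwv]
          unfold HeadAt at hh; rw [hek] at hh; simp at hh

end MixedGraph

/-- Any maximal ancestral graph Markov equivalent to a
bi-directed graph `G` has at least as many arrowheads as the graph
`G^min_<` constructed by Algorithm 4.2. -/
theorem stmt13 {V : Type} [Finite V] [LinearOrder V] (G : MixedGraph V)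
    (hG : G.Bidirected) (hord : ∀ v w : V, G.Bd v ⊂ G.Bd w → v < w)
    (Gb : MixedGraph V) (h1 : Gb.Ancestral) (h2 : Gb.Maximal)
    (h3 : G.MarkovEquiv Gb) :
    (G.gmin).arr ≤ Gb.arr := by
  classical
  have hsk : ∀ v w, G.Adj v w ↔ Gb.Adj v w := by
    intro v w
    constructor
    · intro h
      by_contra hn
      obtain ⟨C, hv, hw, hsep⟩ := h2 v w (MixedGraph.adj_ne h) hn
      exact ((h3 v w C (MixedGraph.adj_ne h) hv hw).2 hsep) (MixedGraph.mconn_of_adj h C)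
    · intro h
      by_contra hn
      have hne : v ≠ w := MixedGraph.adj_ne h
      exact ((h3 v w ∅ hne (by simp) (by simp)).1 (MixedGraph.bidir_sep hG hne hn))
        (MixedGraph.mconn_of_adj h ∅)
  rw [MixedGraph.arr_eq_heads, MixedGraph.arr_eq_heads]
  apply Set.ncard_le_ncard_of_injOn (fun p => if Gb.HeadAt p.1 p.2 then p else (p.2, p.1))
  · rintro ⟨a, b⟩ hp
    simp only [Set.mem_setOf_eq] at hp ⊢
    by_cases hb : Gb.HeadAt a b
    · simp [hb]
    · have hkey := MixedGraph.gmin_key hG hord h1 hsk h3 hp hb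
      simp only [hb, if_false]
      exact Or.inl hkey.2
  · rintro ⟨a, b⟩ hp ⟨c, d⟩ hq h
    simp only [Set.mem_setOf_eq] at hp hq
    by_cases hb : Gb.HeadAt a b <;> by_cases hd : Gb.HeadAt c d <;>
      simp only [hb, hd, if_true, if_false, Prod.mk.injEq] at h
    · simp [h.1, h.2]
    · exfalso
      obtain ⟨key1, -⟩ := MixedGraph.gmin_key hG hord h1 hsk h3 hq hd
      have hrev : (G.gmin).E d c = .arrowFrom := by
        rw [(G.gmin).symm c d, key1]
        rfl
      rw [← h.1, ← h.2] at hrev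
      unfold MixedGraph.HeadAt at hp; rw [hrev] at hp; simp at hp
    · exfalso
      obtain ⟨key1, -⟩ := MixedGraph.gmin_key hG hord h1 hsk h3 hp hb
      have hrev : (G.gmin).E b a = .arrowFrom := by
        rw [(G.gmin).symm a b, key1]
        rfl
      rw [← h.1, ← h.2] at hq
      unfold MixedGraph.HeadAt at hq; rw [hrev] at hq; simp at hq
    · simp [h.1, h.2]
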